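/- arXiv:1301.5723 — 2 statements merged into one kernel-verified Lean document; each statement's English description precedes it below -/
import Mathlib

section
/- The natural word η_ω of a permutation ω is the lexicographically largest element of R(ω), the set of all reduced words of ω. -/
/-- The adjacent transposition `sᵢ = (i, i+1)` as a permutation of `ℕ`. -/
def sGen (i : ℕ) : Equiv.Perm ℕ := Equiv.swap i (i + 1)

/-- The permutation represented by a word. -/
def toPerm (w : List ℕ) : Equiv.Perm ℕ := (w.map sGen).prod

/-- A word is reduced (of minimal length among words representing the same permutation). -/
def IsReducedWord (w : List ℕ) : Prop := ∀ v : List ℕ, toPerm v = toPerm w → w.length ≤ v.length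

/-- `w` is a reduced word for the permutation `ω`. -/
def IsReducedWordOf (w : List ℕ) (ω : Equiv.Perm ℕ) : Prop :=
  toPerm w = ω ∧ ∀ v : List ℕ, toPerm v = ω → w.length ≤ v.length

/-- The relation `<₁`: `β` is obtained from `α` by swapping two adjacent letters
`x, y` with `y ≥ x + 2` (the smaller letter moves right). -/
def Rel1 (α β : List ℕ) : Prop :=
  ∃ (p q : List ℕ) (x y : ℕ), x + 2 ≤ y ∧
    α = p ++ x :: y :: q ∧ β = p ++ y :: x :: q

/-- Lexicographic order (non-strict) on words. -/
def LexLe (α β : List ℕ) : Prop := α = β ∨ List.Lex (· < ·) α β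

/-- A tower word: a nonempty increasing run of consecutive integers. -/
def IsTowerWord (a : List ℕ) : Prop := a ≠ [] ∧ a.Chain' (fun x y => y = x + 1)

/-- First letter of a tower word. -/
def inn (a : List ℕ) : ℕ := a.headI

/-- Last letter of a tower word. -/
def fin' (a : List ℕ) : ℕ := a.getLastD 0

/-- `L` is the tower decomposition of `w`: a factorization into maximal tower words. -/
def IsTowerDecomp (w : List ℕ) (L : List (List ℕ)) : Prop :=
  L.flatten = w ∧ (∀ a ∈ L, IsTowerWord a) ∧
    L.Chain' (fun a b => inn b ≠ fin' a + 1)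

/-- The relation `<₂`: a directed long-braid move of a tower word past its left neighbour. -/
def Rel2 (α β : List ℕ) : Prop :=
  ∃ (A B : List (List ℕ)) (a b b1 b2 : List ℕ),
    IsTowerDecomp α (A ++ a :: b :: B) ∧
    inn a ≤ inn b ∧ inn b < fin' b ∧ fin' b < fin' a ∧
    IsTowerWord b1 ∧ (b2 = [] ∨ IsTowerWord b2) ∧ b1 ++ b2 = b ∧
    β = A.flatten ++ (b1.map (· + 1)) ++ a ++ b2 ++ B.flatten

/-- The directed-braid order: reflexive-transitive closure of `<₁ ∪ <₂`. -/
def DBraid : List ℕ → List ℕ → Prop :=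
  Relation.ReflTransGen (fun α β => Rel1 α β ∨ Rel2 α β)

/-- The natural word of `ω`: the reduced word whose tower decomposition has
strictly decreasing initial letters. -/
def IsNaturalWordOf (η : List ℕ) (ω : Equiv.Perm ℕ) : Prop :=
  IsReducedWordOf η ω ∧ ∃ L, IsTowerDecomp η L ∧ L.Chain' (fun a b => inn b < inn a)

/-- A natural basic word of `ω`: a reduced word whose tower decomposition satisfies
`fin(aᵢ) > in(aᵢ₊₁)` for all `i`. -/
def IsNaturalBasicOf (β : List ℕ) (ω : Equiv.Perm ℕ) : Prop :=
  IsReducedWordOf β ω ∧ ∃ L, IsTowerDecomp β L ∧ L.Chain' (fun a b => inn b < fin' a)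

/-- One step of the track of a letter `b` through a tower word `a`. -/
def trackStep (a : List ℕ) (b : ℕ) : Option ℕ :=
  if inn a < b ∧ b ≤ fin' a then some (b - 1)
  else if b + 2 ≤ inn a ∨ fin' a + 2 ≤ b then some b
  else none

/-- The track sequence of `b` through a list of tower words. -/
def trackSeq : ℕ → List (List ℕ) → List ℕ
  | b, [] => [b]
  | b, a :: rest =>
    match trackStep a b with
    | none => [b]
    | some b' => b :: trackSeq b' rest

/-- The tower decomposition of a word, as a function. -/
def towerDecomp : List ℕ → List (List ℕ)
  | [] => []
  | x :: xs =>
    match towerDecomp xs with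
    | [] => [[x]]
    | t :: ts => if t.headI = x + 1 then (x :: t) :: ts else [x] :: t :: ts

/-! ### Auxiliary lemmas for the proof -/

lemma toPerm_nil : toPerm [] = 1 := rfl

lemma toPerm_cons (u : ℕ) (w : List ℕ) : toPerm (u :: w) = sGen u * toPerm w := by
  simp [toPerm]

lemma sGen_mul_self (u : ℕ) : sGen u * sGen u = 1 := Equiv.swap_mul_self _ _

lemma sGen_inv (u : ℕ) : (sGen u)⁻¹ = sGen u := Equiv.swap_inv _ _

lemma sGen_conj (u p q : ℕ) :
    sGen u * Equiv.swap (sGen u p) (sGen u q) = Equiv.swap p q * sGen u := by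
  unfold sGen
  rw [Equiv.swap_apply_apply, Equiv.swap_inv, ← mul_assoc, ← mul_assoc,
    Equiv.swap_mul_self, one_mul]

lemma sGen_apply (u x : ℕ) : sGen u x = if x = u then u + 1 else if x = u + 1 then u else x :=
  Equiv.swap_apply_def u (u + 1) x

/-- Key exchange lemma: if `(p,q)` is an inversion of `toPerm w`, then a single
letter of `w` can be deleted at the price of multiplying by `swap p q` on the left. -/
lemma exchange : ∀ (w : List ℕ) (p q : ℕ), p < q →
    (toPerm w)⁻¹ q < (toPerm w)⁻¹ p →
    ∃ v : List ℕ, toPerm v = Equiv.swap p q * toPerm w ∧ v.length + 1 = w.length := by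
  intro w
  induction w with
  | nil => intro p q hpq h; simp [toPerm_nil] at h; omega
  | cons u w' ih =>
    intro p q hpq h
    rw [toPerm_cons, mul_inv_rev, sGen_inv] at h
    simp only [Equiv.Perm.mul_apply] at h
    by_cases hc : p = u ∧ q = u + 1
    · refine ⟨w', ?_, rfl⟩
      rw [hc.1, hc.2, toPerm_cons]
      show toPerm w' = sGen u * (sGen u * toPerm w')
      rw [← mul_assoc, sGen_mul_self, one_mul]
    · have hlt : sGen u p < sGen u q := by
        rw [sGen_apply, sGen_apply]
        split_ifs <;> omega
      obtain ⟨v, hv, hlen⟩ := ih (sGen u p) (sGen u q) hlt h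
      refine ⟨u :: v, ?_, by simpa using hlen⟩
      rw [toPerm_cons, hv, ← mul_assoc, sGen_conj, toPerm_cons, mul_assoc]

/-- Properties of the inverse of the permutation of a tower word starting at `m`. -/
lemma tower_props : ∀ (rest : List ℕ) (m : ℕ),
    (m :: rest).Chain' (fun x y => y = x + 1) →
    (∀ x, x < m → (toPerm (m :: rest))⁻¹ x = x) ∧
    (∀ j, m < j → m ≤ (toPerm (m :: rest))⁻¹ j) ∧
    (∀ j j', m < j → j < j' → (toPerm (m :: rest))⁻¹ j < (toPerm (m :: rest))⁻¹ j') := by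
  intro rest
  induction rest with
  | nil =>
    intro m _
    have hinv : ∀ x, (toPerm [m])⁻¹ x = sGen m x := by
      intro x
      rw [toPerm_cons, toPerm_nil, mul_one, sGen_inv]
    refine ⟨?_, ?_, ?_⟩
    · intro x hx; rw [hinv, sGen_apply]; split_ifs <;> omega
    · intro j hj; rw [hinv, sGen_apply]; split_ifs <;> omega
    · intro j j' hj hjj'
      rw [hinv, hinv, sGen_apply, sGen_apply]
      split_ifs <;> omega
  | cons r rest' ih =>
    intro m hch
    obtain ⟨hr, hch'⟩ := List.isChain_cons_cons.mp hch
    subst hr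
    obtain ⟨ih1, ih2, ih3⟩ := ih (m + 1) hch'
    have hinv : ∀ x, (toPerm (m :: (m+1) :: rest'))⁻¹ x
        = (toPerm ((m+1) :: rest'))⁻¹ (sGen m x) := by
      intro x
      rw [toPerm_cons m, mul_inv_rev, sGen_inv, Equiv.Perm.mul_apply]
    have hsm : sGen m m = m + 1 := by rw [sGen_apply]; simp
    have hfix : ∀ x, x ≠ m → x ≠ m + 1 → sGen m x = x := by
      intro x h1 h2; rw [sGen_apply]; split_ifs <;> omega
    have hsm1 : sGen m (m+1) = m := by rw [sGen_apply]; split_ifs <;> omega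
    refine ⟨?_, ?_, ?_⟩
    · intro x hx
      rw [hinv, hfix x (by omega) (by omega)]
      exact ih1 x (by omega)
    · intro j hj
      rw [hinv]
      rcases eq_or_ne j (m+1) with hj1 | hj1
      · subst hj1; rw [hsm1, ih1 m (by omega)]
      · rw [hfix j (by omega) hj1]
        have := ih2 j (by omega)
        omega
    · intro j j' hj hjj'
      rw [hinv, hinv]
      rcases eq_or_ne j (m+1) with hj1 | hj1
      · subst hj1
        rw [hsm1, ih1 m (by omega), hfix j' (by omega) (by omega)]
        have := ih2 j' (by omega)
        omega
      · rw [hfix j (by omega) hj1, hfix j' (by omega) (by omega)]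
        exact ih3 j j' (by omega) hjj'

lemma toPerm_append (u v : List ℕ) : toPerm (u ++ v) = toPerm u * toPerm v := by
  simp [toPerm]

/-- The permutation of a word with a strictly-decreasing tower decomposition has
no inversions among values above the first letter of the first tower. -/
lemma decomp_inv_mono : ∀ (L : List (List ℕ)),
    (∀ a ∈ L, IsTowerWord a) → L.Pairwise (fun a b => inn b < inn a) →
    ∀ j j', (∀ a ∈ L, inn a < j) → j < j' →
      (toPerm L.flatten)⁻¹ j < (toPerm L.flatten)⁻¹ j' := by
  intro L
  induction L with
  | nil => intro _ _ j j' _ hjj'; simpa [toPerm_nil] using hjj'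
  | cons a L₁ ih =>
    intro htow hpair j j' hbig hjj'
    obtain ⟨hne, hch⟩ := htow a (by simp)
    obtain ⟨m, t, rfl⟩ : ∃ m t, a = m :: t := by
      cases a with
      | nil => exact absurd rfl hne
      | cons m t => exact ⟨m, t, rfl⟩
    obtain ⟨T1, T2, T3⟩ := tower_props t m hch
    have hm : inn (m :: t) = m := rfl
    have hmj : m < j := by have := hbig (m :: t) (by simp); rwa [hm] at this
    have hstep : ∀ x, (toPerm ((m :: t) :: L₁).flatten)⁻¹ x
        = (toPerm L₁.flatten)⁻¹ ((toPerm (m :: t))⁻¹ x) := by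
      intro x
      rw [List.flatten_cons, toPerm_append, mul_inv_rev, Equiv.Perm.mul_apply]
    rw [hstep, hstep]
    have hpair' := List.pairwise_cons.mp hpair
    apply ih (fun b hb => htow b (List.mem_cons_of_mem _ hb)) hpair'.2
    · intro b hb
      have h1 : inn b < m := hpair'.1 b hb
      have h2 := T2 j hmj
      omega
    · exact T3 j j' hmj hjj'
/-- the natural word of ω is lexicographically largest in R(ω). -/
theorem natural_word_lex_max (ω : Equiv.Perm ℕ) (η : List ℕ)
    (hη : IsNaturalWordOf η ω) :
    ∀ α : List ℕ, IsReducedWordOf α ω → LexLe α η := by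
  induction η generalizing ω with
  | nil =>
    intro α hα
    left
    have h0 := hα.2 [] hη.1.1
    exact List.eq_nil_of_length_eq_zero (Nat.le_zero.mp h0)
  | cons i η' IH =>
    intro α hα
    obtain ⟨⟨hηω, hηmin⟩, L, ⟨hLf, hLtow, hLchain⟩, hLdec⟩ := hη
    obtain ⟨a, L₁, rfl⟩ : ∃ a L₁, L = a :: L₁ := by
      cases L with
      | nil => simp at hLf
      | cons a L₁ => exact ⟨a, L₁, rfl⟩
    obtain ⟨htne, htch⟩ := hLtow a (by simp)
    obtain ⟨x, t, rfl⟩ : ∃ x t, a = x :: t := by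
      cases a with
      | nil => exact absurd rfl htne
      | cons x t => exact ⟨x, t, rfl⟩
    rw [List.flatten_cons, List.cons_append] at hLf
    injection hLf with hx hη'
    subst x
    haveI : IsTrans (List ℕ) (fun a b => inn b < inn a) :=
      ⟨fun _ _ _ h1 h2 => lt_trans h2 h1⟩
    have hpair : ((i :: t) :: L₁).Pairwise (fun a b => inn b < inn a) :=
      List.isChain_iff_pairwise.mp hLdec
    have hheadlt : ∀ b ∈ L₁, inn b < i := (List.pairwise_cons.mp hpair).1
    have hωη : sGen i * toPerm η' = ω := by rw [← toPerm_cons]; exact hηω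
    cases α with
    | nil => right; exact List.Lex.nil
    | cons j α' =>
      have hωα : sGen j * toPerm α' = ω := by rw [← toPerm_cons]; exact hα.1
      rcases lt_trichotomy j i with hji | rfl | hji
      · right; exact List.Lex.rel hji
      · -- equal first letters: recurse on tails
        have hαred : IsReducedWordOf α' (toPerm η') := by
          refine ⟨mul_left_cancel (hωα.trans hωη.symm), fun v hv => ?_⟩
          have := hα.2 (j :: v) (by rw [toPerm_cons, hv]; exact hωη)
          simpa using this
        have hη'red : IsReducedWordOf η' (toPerm η') := by
          refine ⟨rfl, fun v hv => ?_⟩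
          have := hηmin (j :: v) (by rw [toPerm_cons, hv]; exact hωη)
          simpa using this
        have hη'nat : IsNaturalWordOf η' (toPerm η') := by
          refine ⟨hη'red, ?_⟩
          cases t with
          | nil =>
            refine ⟨L₁, ⟨by simpa using hη', fun b hb => hLtow b (by simp [hb]), hLchain.tail⟩,
              hLdec.tail⟩
          | cons r t' =>
            have hr : r = j + 1 := (List.isChain_cons_cons.mp htch).1
            have hfin : fin' (r :: t') = fin' (j :: r :: t') := by
              unfold fin'
              rw [List.getLastD_cons, List.getLastD_cons, List.getLastD_cons]
            refine ⟨(r :: t') :: L₁, ⟨?_, ?_, ?_⟩, ?_⟩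
            · simpa using hη'
            · intro b hb
              rcases List.mem_cons.mp hb with rfl | hb
              · exact ⟨List.cons_ne_nil _ _, (List.isChain_cons_cons.mp htch).2⟩
              · exact hLtow b (by simp [hb])
            · refine List.isChain_cons.mpr ?_
              refine ⟨?_, (List.isChain_cons.mp hLchain).2⟩
              intro b hb
              rw [hfin]
              exact (List.isChain_cons.mp hLchain).1 b hb
            · refine List.isChain_cons.mpr ?_
              refine ⟨?_, (List.isChain_cons.mp hLdec).2⟩
              intro b hb
              have h1 := (List.isChain_cons.mp hLdec).1 b hb
              show inn b < r
              unfold inn at h1 ⊢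
              simp only [List.headI] at h1 ⊢
              omega
        rcases IH (toPerm η') hη'nat α' hαred with h | h
        · left; rw [h]
        · right; exact List.Lex.cons h
      · -- j > i is impossible
        exfalso
        have hbig : ∀ a ∈ (i :: t) :: L₁, inn a < j := by
          intro a ha
          rcases List.mem_cons.mp ha with rfl | ha
          · exact hji
          · exact lt_trans (hheadlt a ha) hji
        have hmono := decomp_inv_mono ((i :: t) :: L₁) hLtow hpair j (j + 1) hbig
          (Nat.lt_succ_self j)
        have hfl : ((i :: t) :: L₁).flatten = i :: η' := by
          rw [List.flatten_cons, List.cons_append, hη']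
        rw [hfl, hηω] at hmono
        have hσ : toPerm α' = sGen j * ω := by
          rw [← hωα, ← mul_assoc, sGen_mul_self, one_mul]
        have hsj : sGen j (j + 1) = j := by rw [sGen_apply]; split_ifs <;> omega
        have hsj' : sGen j j = j + 1 := by rw [sGen_apply]; simp
        have h1 : (toPerm α')⁻¹ (j + 1) = ω⁻¹ j := by
          rw [hσ, mul_inv_rev, sGen_inv, Equiv.Perm.mul_apply, hsj]
        have h2 : (toPerm α')⁻¹ j = ω⁻¹ (j + 1) := by
          rw [hσ, mul_inv_rev, sGen_inv, Equiv.Perm.mul_apply, hsj']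
        obtain ⟨v, hv, hlen⟩ := exchange α' j (j + 1) (Nat.lt_succ_self j)
          (by rw [h1, h2]; exact hmono)
        have hvω : toPerm v = ω := by
          rw [hv, hσ, show Equiv.swap j (j + 1) = sGen j from rfl, ← mul_assoc,
            sGen_mul_self, one_mul]
        have hle := hα.2 v hvω
        simp only [List.length_cons] at hle
        omega
end

section
/- Each step of the selection sort algorithm on reduced words produces a word related to the previous one by <_1; hence the algorithm produces a chain α = β^0 <_1 β^1 <_1 … <_1 β^k = β in the directed-braid poset, terminating at a natural basic word β of ω. -/
-- ===== auxiliary lemmas =====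

lemma toPerm_mid (p q : List ℕ) (u v : ℕ) :
    toPerm (p ++ u :: v :: q) = toPerm p * (sGen u * sGen v * toPerm q) := by
  simp [toPerm, mul_assoc]

lemma toPerm_double (p q : List ℕ) (x : ℕ) :
    toPerm (p ++ x :: x :: q) = toPerm (p ++ q) := by
  rw [toPerm_mid]
  simp [toPerm, sGen, Equiv.swap_mul_self, mul_assoc]

lemma sGen_comm {x y : ℕ} (h : x + 2 ≤ y) : sGen x * sGen y = sGen y * sGen x := by
  unfold sGen
  ext n
  simp only [Equiv.Perm.mul_apply, Equiv.swap_apply_def]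
  split_ifs <;> omega

lemma rel1_toPerm {a b : List ℕ} (h : Rel1 a b) : toPerm b = toPerm a := by
  obtain ⟨p, q, x, y, hxy, ha, hb⟩ := h
  subst ha hb
  rw [toPerm_mid, toPerm_mid, sGen_comm hxy]

lemma rel1_length {a b : List ℕ} (h : Rel1 a b) : b.length = a.length := by
  obtain ⟨p, q, x, y, _, ha, hb⟩ := h
  subst ha hb
  simp

lemma rel1_reduced {ω : Equiv.Perm ℕ} {a b : List ℕ} (h : Rel1 a b)
    (ha : IsReducedWordOf a ω) : IsReducedWordOf b ω :=
  ⟨(rel1_toPerm h).trans ha.1, fun v hv => (rel1_length h) ▸ ha.2 v hv⟩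

/-- position-weighted measure -/
def fMeas : List ℕ → ℕ
  | [] => 0
  | _ :: xs => xs.sum + fMeas xs

lemma fMeas_cons (u : ℕ) (l : List ℕ) : fMeas (u :: l) = l.sum + fMeas l := rfl

lemma fMeas_swap (p q : List ℕ) (x y : ℕ) :
    fMeas (p ++ x :: y :: q) + x = fMeas (p ++ y :: x :: q) + y := by
  induction p with
  | nil => simp only [List.nil_append, fMeas_cons, List.sum_cons]; omega
  | cons a p ih =>
      rw [List.cons_append, List.cons_append, fMeas_cons, fMeas_cons]
      have hs : (p ++ x :: y :: q).sum = (p ++ y :: x :: q).sum := by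
        simp [List.sum_append]; omega
      omega

lemma rel1_fMeas {a b : List ℕ} (h : Rel1 a b) : fMeas b < fMeas a := by
  obtain ⟨p, q, x, y, hxy, ha, hb⟩ := h
  subst ha hb
  have := fMeas_swap p q x y
  omega

lemma towerDecomp_spec (w : List ℕ) : IsTowerDecomp w (towerDecomp w) := by
  induction w with
  | nil => exact ⟨rfl, by simp [towerDecomp], by simp [towerDecomp, List.Chain']⟩
  | cons x xs ih =>
    obtain ⟨hflat, htower, hchain⟩ := ih
    cases hd : towerDecomp xs with
    | nil =>
      rw [hd] at hflat
      simp only [towerDecomp, hd]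
      refine ⟨by simp [← hflat], ?_, by simp [List.Chain']⟩
      intro a ha
      simp only [List.mem_singleton] at ha
      subst ha
      exact ⟨by simp, by simp [List.Chain']⟩
    | cons t ts =>
      rw [hd] at hflat htower hchain
      have htw : IsTowerWord t := htower t (by simp)
      obtain ⟨htne, htch⟩ := htw
      simp only [towerDecomp, hd]
      by_cases hxt : t.headI = x + 1
      · rw [if_pos hxt]
        refine ⟨by simp [← hflat], ?_, ?_⟩
        · intro a ha
          rcases List.mem_cons.1 ha with h | h
          · subst h
            refine ⟨by simp, ?_⟩
            cases t with
            | nil => exact absurd rfl htne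
            | cons u ut =>
              simp only [List.headI] at hxt
              exact List.IsChain.cons_cons (by omega) htch
          · exact htower a (List.mem_cons_of_mem _ h)
        · have hfin : fin' (x :: t) = fin' t := by
            cases t with
            | nil => exact absurd rfl htne
            | cons u ut => simp [fin']
          cases ts with
          | nil => simp [List.Chain']
          | cons s ss =>
            simp only [List.Chain', List.isChain_cons_cons] at hchain ⊢
            exact ⟨by rw [hfin]; exact hchain.1, hchain.2⟩
      · rw [if_neg hxt]
        refine ⟨by simp [← hflat], ?_, ?_⟩
        · intro a ha
          rcases List.mem_cons.1 ha with h | h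
          · subst h; exact ⟨by simp, by simp [List.Chain']⟩
          · exact htower a h
        · simp only [List.Chain', List.isChain_cons_cons]
          refine ⟨?_, hchain⟩
          simpa [inn, fin'] using hxt

lemma chain'_break {γ : Type*} (R : γ → γ → Prop) :
    ∀ L : List γ, ¬ L.Chain' R → ∃ A a b B, L = A ++ a :: b :: B ∧ ¬ R a b := by
  intro L
  induction L with
  | nil => intro h; exact absurd List.isChain_nil h
  | cons x xs ih =>
    intro h
    cases xs with
    | nil => exact absurd (List.isChain_singleton x) h
    | cons y ys =>
      by_cases hxy : R x y
      · have h2 : ¬ (y :: ys).Chain' R := fun hc => h (List.isChain_cons_cons.2 ⟨hxy, hc⟩)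
        obtain ⟨A, a, b, B, hL, hR⟩ := ih h2
        exact ⟨x :: A, a, b, B, by rw [hL]; rfl, hR⟩
      · exact ⟨[], x, y, ys, rfl, hxy⟩

lemma chain'_middle {γ : Type*} {R : γ → γ → Prop} {A B : List γ} {a b : γ}
    (h : (A ++ a :: b :: B).Chain' R) : R a b := by
  have h2 := (List.isChain_append.1 h).2.1
  exact (List.isChain_cons_cons.1 h2).1

lemma tower_split (a : List ℕ) (ha : a ≠ []) :
    a = a.dropLast ++ [fin' a] ∧ inn a :: a.tail = a := by
  constructor
  · conv_lhs => rw [← List.dropLast_append_getLast ha]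
    congr 1
    rw [fin', List.getLastD_eq_getLast?, List.getLast?_eq_getLast ha]
    rfl
  · cases a with
    | nil => exact absurd rfl ha
    | cons u ut => rfl

lemma exists_step {ω : Equiv.Perm ℕ} {α : List ℕ} (hα : IsReducedWordOf α ω)
    (h : ¬ (towerDecomp α).Chain' (fun a b => inn b < fin' a)) :
    ∃ α', Rel1 α α' := by
  obtain ⟨hflat, htower, hchain⟩ := towerDecomp_spec α
  obtain ⟨A, a, b, B, hL, hab⟩ := chain'_break _ _ h
  push_neg at hab
  rw [hL] at hflat hchain htower
  have hane : a ≠ [] := (htower a (by simp)).1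
  have hbne : b ≠ [] := (htower b (by simp)).1
  have hne1 : inn b ≠ fin' a + 1 := chain'_middle (R := fun s t => inn t ≠ fin' s + 1) hchain
  set x := fin' a with hx
  set y := inn b with hy
  obtain ⟨ha1, _⟩ := tower_split a hane
  obtain ⟨_, hb1⟩ := tower_split b hbne
  have hαeq : α = (A.flatten ++ a.dropLast) ++ x :: y :: (b.tail ++ B.flatten) := by
    rw [← hflat]
    simp only [List.flatten_append, List.flatten_cons]
    conv_lhs => rw [ha1, ← hb1]
    simp
    exact ⟨hx.symm, hy.symm⟩
  have hyx : y ≠ x := by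
    intro hcon
    have hperm : toPerm ((A.flatten ++ a.dropLast) ++ (b.tail ++ B.flatten)) = ω := by
      rw [← toPerm_double _ _ x]
      rw [← hcon] at hαeq ⊢
      rw [← hαeq]
      exact hα.1
    have := hα.2 _ hperm
    rw [hαeq] at this
    simp at this
  have hgap : x + 2 ≤ y := by omega
  exact ⟨(A.flatten ++ a.dropLast) ++ y :: x :: (b.tail ++ B.flatten),
    (A.flatten ++ a.dropLast), (b.tail ++ B.flatten), x, y, hgap, hαeq, rfl⟩

/-- from any reduced word of ω, the selection sort algorithm yields a
chain of `<₁`-steps terminating at a natural basic word. -/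
theorem selection_sort_chain (ω : Equiv.Perm ℕ) (α : List ℕ)
    (hα : IsReducedWordOf α ω) :
    ∃ β : List ℕ, IsNaturalBasicOf β ω ∧ Relation.ReflTransGen Rel1 α β := by
  
  suffices H : ∀ n a, fMeas a = n → IsReducedWordOf a ω →
      ∃ β, IsNaturalBasicOf β ω ∧ Relation.ReflTransGen Rel1 a β from
    H (fMeas α) α rfl hα
  intro n
  induction n using Nat.strong_induction_on with
  | _ n ih =>
    intro a hn ha
    by_cases h : (towerDecomp a).Chain' (fun s t => inn t < fin' s)
    · exact ⟨a, ⟨ha, towerDecomp a, towerDecomp_spec a, h⟩, Relation.ReflTransGen.refl⟩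
    · obtain ⟨a', hstep⟩ := exists_step ha h
      obtain ⟨β, hβ, hch⟩ := ih (fMeas a') (hn ▸ rel1_fMeas hstep) a' rfl (rel1_reduced hstep ha)
      exact ⟨β, hβ, Relation.ReflTransGen.head hstep hch⟩
end
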